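/- arXiv:1307.7813 — 3 statements merged into one kernel-verified Lean document; each statement's English description precedes it below -/
import Mathlib

section
/- Let G be a directed graph with nonnegative rational arc weights and let s1, s2 be two distinct vertices and α1, α2 ∈ ℚ≥0. Then there exists a pair of compatible paths for s1 and s2 with bounds α1, α2 in G if and only if there exists a vertex t such that d(s1,t) ≤ α1 and d(s2,t) ≤ α2. -/
/-- `l` is a simple path (no repeated vertices) from `x` to `y` in the directed
graph with arc relation `A`, given as its list of vertices. -/
def IsPath {V : Type*} (A : V → V → Prop) (x y : V) (l : List V) : Prop :=
  l.Chain' A ∧ l.Nodup ∧ l.head? = some x ∧ l.getLast? = some y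

/-- The length of a path (given by its vertex list) w.r.t. arc weights `w`:
the sum of the weights of its arcs. -/
def pathLen {V : Type*} (w : V → V → ℚ) (l : List V) : ℚ :=
  ((l.zip l.tail).map fun p => w p.1 p.2).sum

/-- `d(x,y) ≤ α`: there is a path from `x` to `y` of length at most `α`.
(On a finite graph, this is equivalent to the shortest-path distance from `x`
to `y` being at most `α`.) -/
def distLE {V : Type*} (A : V → V → Prop) (w : V → V → ℚ) (x y : V) (α : ℚ) : Prop :=
  ∃ l, IsPath A x y l ∧ pathLen w l ≤ α


lemma pathLen_cons_cons {V : Type*} (w : V → V → ℚ) (a b : V) (t : List V) :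
    pathLen w (a :: b :: t) = w a b + pathLen w (b :: t) := by simp [pathLen]

lemma pathLen_nonneg {V : Type*} {A : V → V → Prop} {w : V → V → ℚ}
    (hw : ∀ u v, A u v → 0 ≤ w u v) :
    ∀ l : List V, List.Chain' A l → 0 ≤ pathLen w l
  | [], _ => le_refl 0
  | [_], _ => le_refl 0
  | a :: b :: t, h => by
      rw [pathLen_cons_cons]
      obtain ⟨hab, ht⟩ := List.isChain_cons_cons.mp h
      exact add_nonneg (hw _ _ hab) (pathLen_nonneg hw (b :: t) ht)

lemma pathLen_prefix_le {V : Type*} {A : V → V → Prop} {w : V → V → ℚ}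
    (hw : ∀ u v, A u v → 0 ≤ w u v) :
    ∀ (p q : List V), List.Chain' A (p ++ q) → pathLen w p ≤ pathLen w (p ++ q)
  | [], q, h => pathLen_nonneg hw _ h
  | [a], q, h => by
      have : pathLen w [a] = 0 := rfl
      rw [this]; exact pathLen_nonneg hw _ h
  | a :: b :: t, q, h => by
      have h' : List.Chain' A ((b :: t) ++ q) := (List.isChain_cons_cons.mp h).2
      have ih := pathLen_prefix_le hw (b :: t) q h'
      show pathLen w (a :: b :: t) ≤ pathLen w (a :: b :: (t ++ q))
      rw [pathLen_cons_cons, pathLen_cons_cons]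
      exact add_le_add (le_refl _) ih

lemma split_first {α : Type*} (P : α → Prop) [DecidablePred P] :
    ∀ l : List α, (∃ x ∈ l, P x) → ∃ a x b, l = a ++ x :: b ∧ P x ∧ ∀ y ∈ a, ¬ P y
  | [], h => by simp at h
  | c :: l, h => by
      by_cases hc : P c
      · exact ⟨[], c, l, rfl, hc, by simp⟩
      · have hl : ∃ x ∈ l, P x := by
          obtain ⟨x, hx, hPx⟩ := h
          rcases List.mem_cons.mp hx with rfl | hx
          · exact absurd hPx hc
          · exact ⟨x, hx, hPx⟩
        obtain ⟨a, x, b, rfl, hPx, ha⟩ := split_first P l hl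
        refine ⟨c :: a, x, b, rfl, hPx, ?_⟩
        intro y hy
        rcases List.mem_cons.mp hy with rfl | hy
        · exact hc
        · exact ha y hy

lemma isPath_prefix {V : Type*} {A : V → V → Prop} {x y : V} {l1 l2 : List V} {z : V}
    (h : IsPath A x y (l1 ++ z :: l2)) : IsPath A x z (l1 ++ [z]) := by
  obtain ⟨hc, hn, hh, _⟩ := h
  have hpre : (l1 ++ [z]) <+: (l1 ++ z :: l2) := ⟨l2, by simp⟩
  refine ⟨hc.prefix hpre, hn.sublist hpre.sublist, ?_, by simp⟩
  cases l1 with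
  | nil => simpa using hh
  | cons a l => simpa using hh

lemma mem_of_getLast?' {α : Type*} : ∀ {l : List α} {a : α}, l.getLast? = some a → a ∈ l
  | [], _, h => by simp at h
  | [b], _, h => by simp_all [List.getLast?]
  | b :: c :: t, a, h => by
      rw [List.getLast?_cons_cons] at h
      exact List.mem_cons_of_mem _ (mem_of_getLast?' h)

/-- There exists a pair of compatible paths for `s1 ≠ s2` with bounds `α1, α2`
(two paths `p1 : s1 ⇝ t`, `p2 : s2 ⇝ t` sharing no vertex other than `t`, with
`|p1| ≤ α1`, `|p2| ≤ α2`) iff there is a vertex `t` with `d(s1,t) ≤ α1` and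
`d(s2,t) ≤ α2`. -/
theorem stmt0 {V : Type*} [Fintype V] (A : V → V → Prop) (w : V → V → ℚ)
    (hw : ∀ u v, A u v → 0 ≤ w u v)
    (s1 s2 : V) (hs : s1 ≠ s2) (α1 α2 : ℚ) (hα1 : 0 ≤ α1) (hα2 : 0 ≤ α2) :
    (∃ (t : V) (p1 p2 : List V),
        IsPath A s1 t p1 ∧ IsPath A s2 t p2 ∧
        (∀ v, v ∈ p1 → v ∈ p2 → v = t) ∧
        pathLen w p1 ≤ α1 ∧ pathLen w p2 ≤ α2) ↔
      ∃ t : V, distLE A w s1 t α1 ∧ distLE A w s2 t α2 := by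
  constructor
  · rintro ⟨t, p1, p2, h1, h2, -, hl1, hl2⟩
    exact ⟨t, ⟨p1, h1, hl1⟩, ⟨p2, h2, hl2⟩⟩
  · rintro ⟨t, ⟨p1, hp1, hl1⟩, ⟨p2, hp2, hl2⟩⟩
    classical
    have ht1 : t ∈ p1 := mem_of_getLast?' hp1.2.2.2
    have ht2 : t ∈ p2 := mem_of_getLast?' hp2.2.2.2
    obtain ⟨a, x, b, rfl, hxp1, ha⟩ := split_first (· ∈ p1) p2 ⟨t, ht2, ht1⟩
    obtain ⟨c, d, rfl⟩ := List.append_of_mem hxp1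
    refine ⟨x, c ++ [x], a ++ [x], isPath_prefix hp1, isPath_prefix hp2, ?_, ?_, ?_⟩
    · intro v hv1 hv2
      rcases List.mem_append.mp hv2 with hv2 | hv2
      · exfalso
        apply ha v hv2
        rcases List.mem_append.mp hv1 with hv1 | hv1
        · exact List.mem_append.mpr (Or.inl hv1)
        · simp_all
      · simpa using hv2
    · refine le_trans ?_ hl1
      have hc : List.Chain' A ((c ++ [x]) ++ d) := by simpa using hp1.1
      have := pathLen_prefix_le hw (c ++ [x]) d hc
      simpa using this
    · refine le_trans ?_ hl2
      have hc : List.Chain' A ((a ++ [x]) ++ b) := by simpa using hp2.1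
      have := pathLen_prefix_le hw (a ++ [x]) b hc
      simpa using this
end

section
/- Let G = (V,E) be a directed graph with n = |V| ≥ 2 vertices and let s ≠ t be two of its vertices. Construct G′ from G by adding new vertices s′, t′ and n−2 further new vertices u1, …, u_{n−2}, together with the arcs (s,s′), (t,t′), and the arcs of the directed path s′ → u1 → ⋯ → u_{n−2} → t′ (so that this new path from s′ to t′ has exactly n vertices). Then there exist vertices x, y of G′ and two paths from x to y in G′ that share no vertices other than x and y and each contain at least n+1 vertices, if and only if G contains a Hamiltonian path from s to t (a path from s to t visiting every vertex of V exactly once). -/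
/-- The arcs of the graph `G'` obtained from `G = (V,A)` by adding the new
vertices `s' = inr 0`, `u_1 = inr 1`, …, `u_{n-2} = inr (n-2)`, `t' = inr (n-1)`
together with the arcs `(s,s')`, `(t,t')` and the arcs of the directed path
`s' → u_1 → ⋯ → u_{n-2} → t'`. -/
def extArcs {V : Type*} (A : V → V → Prop) (s t : V) (n : ℕ) :
    (V ⊕ Fin n) → (V ⊕ Fin n) → Prop := fun x y =>
  (∃ a b : V, x = Sum.inl a ∧ y = Sum.inl b ∧ A a b) ∨
  (∃ j : Fin n, x = Sum.inl s ∧ y = Sum.inr j ∧ (j : ℕ) = 0) ∨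
  (∃ j : Fin n, x = Sum.inl t ∧ y = Sum.inr j ∧ (j : ℕ) = n - 1) ∨
  (∃ i j : Fin n, x = Sum.inr i ∧ y = Sum.inr j ∧ (j : ℕ) = (i : ℕ) + 1)

namespace Stmt7Aux

variable {V : Type*} {A : V → V → Prop} {s t : V} {n : ℕ}

lemma head?_get {α : Type*} {l : List α} (h : 0 < l.length) :
    l.head? = some (l.get ⟨0, h⟩) := by
  cases l with
  | nil => simp at h
  | cons a l => simp

lemma getLast?_get {α : Type*} {l : List α} (h : 0 < l.length) :
    l.getLast? = some (l.get ⟨l.length - 1, by omega⟩) := by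
  rw [List.getLast?_eq_getLast (by intro e; subst e; simp at h),
    List.getLast_eq_getElem]
  rfl

lemma get_idx_congr {α : Type*} (l : List α) {i j : ℕ} (hij : i = j)
    (hi : i < l.length) (hj : j < l.length) :
    l.get ⟨i, hi⟩ = l.get ⟨j, hj⟩ := by subst hij; rfl

lemma out_inr {i : Fin n} {z : V ⊕ Fin n} (h : extArcs A s t n (Sum.inr i) z) :
    ∃ hlt : (i : ℕ) + 1 < n, z = Sum.inr ⟨(i : ℕ) + 1, hlt⟩ := by
  rcases h with ⟨a, b, hx, _, _⟩ | ⟨j, hx, _, _⟩ | ⟨j, hx, _, _⟩ | ⟨i', j, hx, hy, hj⟩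
  · exact absurd hx (by simp)
  · exact absurd hx (by simp)
  · exact absurd hx (by simp)
  · obtain rfl : i' = i := (Sum.inr.inj hx).symm
    exact ⟨hj ▸ j.isLt, by rw [hy]; congr 1; exact Fin.ext hj⟩

lemma in_inr {j : Fin n} {z : V ⊕ Fin n} (h : extArcs A s t n z (Sum.inr j)) :
    (z = Sum.inl s ∧ (j : ℕ) = 0) ∨ (z = Sum.inl t ∧ (j : ℕ) = n - 1) ∨
      ∃ i : Fin n, z = Sum.inr i ∧ (j : ℕ) = (i : ℕ) + 1 := by
  rcases h with ⟨a, b, _, hy, _⟩ | ⟨j', hx, hy, hj⟩ | ⟨j', hx, hy, hj⟩ | ⟨i, j', hx, hy, hj⟩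
  · exact absurd hy (by simp)
  · obtain rfl : j' = j := (Sum.inr.inj hy).symm
    exact Or.inl ⟨hx, hj⟩
  · obtain rfl : j' = j := (Sum.inr.inj hy).symm
    exact Or.inr (Or.inl ⟨hx, hj⟩)
  · obtain rfl : j' = j := (Sum.inr.inj hy).symm
    exact Or.inr (Or.inr ⟨i, hx, hj⟩)

lemma inl_inl {a b : V} (h : extArcs A s t n (Sum.inl a) (Sum.inl b)) : A a b := by
  rcases h with ⟨a', b', hx, hy, hA⟩ | ⟨j, _, hy, _⟩ | ⟨j, _, hy, _⟩ | ⟨i, j, hx, _, _⟩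
  · obtain rfl : a' = a := (Sum.inl.inj hx).symm
    obtain rfl : b' = b := (Sum.inl.inj hy).symm
    exact hA
  · exact absurd hy (by simp)
  · exact absurd hy (by simp)
  · exact absurd hx (by simp)

lemma key [Fintype V] (hst : s ≠ t) (hn2 : 2 ≤ n) (hcard : n = Fintype.card V)
    {x y : V ⊕ Fin n} {p1 p2 : List (V ⊕ Fin n)}
    (h1 : IsPath (extArcs A s t n) x y p1) (h2 : IsPath (extArcs A s t n) x y p2)
    (hdisj : ∀ z, z ∈ p1 → z ∈ p2 → z = x ∨ z = y)
    (hl1 : p1.length = n + 1) (hl2 : p2.length = n + 1)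
    (hall : ∀ z : V ⊕ Fin n, z ∈ p1 ∨ z ∈ p2)
    (h0 : Sum.inr (⟨0, by omega⟩ : Fin n) ∈ p1) :
    ∃ p : List V, IsPath A s t p ∧ ∀ v : V, v ∈ p := by
  obtain ⟨hc1, hnd1, hh1, hg1⟩ := h1
  obtain ⟨hc2, hnd2, hh2, hg2⟩ := h2
  unfold List.Chain' at hc1 hc2
  rw [List.isChain_iff_getElem] at hc1 hc2
  replace hc1 : ∀ (i : ℕ) (hi : i + 1 < p1.length),
      extArcs A s t n (p1.get ⟨i, by omega⟩) (p1.get ⟨i + 1, hi⟩) := hc1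
  replace hc2 : ∀ (i : ℕ) (hi : i + 1 < p2.length),
      extArcs A s t n (p2.get ⟨i, by omega⟩) (p2.get ⟨i + 1, hi⟩) := hc2
  have inj2 : ∀ (i j : ℕ) (hi : i < p2.length) (hj : j < p2.length),
      p2.get ⟨i, hi⟩ = p2.get ⟨j, hj⟩ → i = j := by
    intro i j hi hj h
    exact Fin.mk_eq_mk.mp (hnd2.get_inj_iff.mp h)
  have hx1 : p1.get ⟨0, by omega⟩ = x := by
    have := (head?_get (l := p1) (by omega)).symm.trans hh1
    exact Option.some.inj this
  have hy1 : p1.get ⟨n, by omega⟩ = y := by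
    have := (getLast?_get (l := p1) (by omega)).symm.trans hg1
    exact (get_idx_congr p1 (by omega) (by omega) (by omega)).trans (Option.some.inj this)
  have hx2 : p2.get ⟨0, by omega⟩ = x := by
    have := (head?_get (l := p2) (by omega)).symm.trans hh2
    exact Option.some.inj this
  have hy2 : p2.get ⟨n, by omega⟩ = y := by
    have := (getLast?_get (l := p2) (by omega)).symm.trans hg2
    exact (get_idx_congr p2 (by omega) (by omega) (by omega)).trans (Option.some.inj this)
  obtain ⟨⟨k, hk⟩, hgk⟩ := List.mem_iff_get.mp h0
  have stepA : ∀ (j : ℕ) (hj : j < n) (hkj : k + j ≤ n),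
      p1.get ⟨k + j, by omega⟩ = Sum.inr ⟨j, hj⟩ := by
    intro j
    induction j with
    | zero =>
      intro hj _
      exact (get_idx_congr p1 (by omega) (by omega) hk).trans hgk
    | succ j ih =>
      intro hj hkj
      have h1' := ih (by omega) (by omega)
      have harc := hc1 (k + j) (by omega)
      rw [h1'] at harc
      obtain ⟨hlt, hz⟩ := out_inr harc
      exact (get_idx_congr p1 (by omega) (by omega) (by omega)).trans hz
  have hk1 : 1 ≤ k := by
    by_contra hcon
    have hk0 : k = 0 := by omega
    have hgn : p1.get ⟨n - 1, by omega⟩ = Sum.inr ⟨n - 1, by omega⟩ :=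
      (get_idx_congr p1 (show n - 1 = k + (n-1) by omega) (by omega) (by omega)).trans
        (stepA (n - 1) (by omega) (by omega))
    have harc := hc1 (n - 1) (by omega)
    rw [hgn] at harc
    obtain ⟨hlt, _⟩ := out_inr harc
    have hlt' : n - 1 + 1 < n := hlt
    omega
  -- the vertex before `inr 0` is `inl s`
  have hs : p1.get ⟨k - 1, by omega⟩ = Sum.inl s := by
    have harc := hc1 (k - 1) (by omega)
    have hk1e : p1.get ⟨k - 1 + 1, by omega⟩ = Sum.inr (⟨0, by omega⟩ : Fin n) :=
      (get_idx_congr p1 (by omega) (by omega) hk).trans hgk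
    rw [hk1e] at harc
    rcases in_inr harc with ⟨hzs, _⟩ | ⟨_, h'⟩ | ⟨i, _, h'⟩
    · exact hzs
    · have : (0 : ℕ) = n - 1 := h'
      omega
    · have : (0 : ℕ) = (i : ℕ) + 1 := h'
      omega
  by_cases hk2 : k = 1
  · -- Hamiltonian path case
    subst hk2
    have hxs : x = Sum.inl s := hx1.symm.trans hs
    have hyr : y = Sum.inr (⟨n - 1, by omega⟩ : Fin n) := by
      rw [← hy1]
      exact (get_idx_congr p1 (show n = 1 + (n - 1) by omega) (by omega) (by omega)).trans
        (stepA (n - 1) (by omega) (by omega))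
    have hinr1 : ∀ j : Fin n, Sum.inr j ∈ p1 := by
      intro j
      have hj : Sum.inr j = p1.get ⟨1 + (j : ℕ), by omega⟩ :=
        (stepA (j : ℕ) j.isLt (by omega)).symm
      rw [hj]
      exact List.get_mem p1 _
    have hmem1 : ∀ z ∈ p1, z = Sum.inl s ∨ ∃ j : Fin n, z = Sum.inr j := by
      intro z hz
      obtain ⟨⟨i, hi⟩, hgi⟩ := List.mem_iff_get.mp hz
      by_cases hi0 : i = 0
      · subst hi0
        left
        rw [← hgi]
        exact hx1.trans hxs
      · right
        refine ⟨⟨i - 1, by omega⟩, ?_⟩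
        rw [← hgi]
        exact (get_idx_congr p1 (show i = 1 + (i - 1) by omega) (by omega) (by omega)).trans
          (stepA (i - 1) (by omega) (by omega))
    have hP2 : ∀ (i : ℕ) (hi : i < n), ∃ v : V, p2.get ⟨i, by omega⟩ = Sum.inl v := by
      intro i hi
      cases hg : p2.get ⟨i, by omega⟩ with
      | inl v => exact ⟨v, rfl⟩
      | inr m =>
        exfalso
        have hm1 : Sum.inr m ∈ p1 := hinr1 m
        have hm2 : Sum.inr m ∈ p2 := by rw [← hg]; exact List.get_mem p2 _
        rcases hdisj _ hm1 hm2 with h' | h'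
        · rw [hxs] at h'; simp at h'
        · rw [hyr] at h'
          have hm : m = ⟨n - 1, by omega⟩ := Sum.inr.inj h'
          have heq : p2.get ⟨i, by omega⟩ = p2.get ⟨n, by omega⟩ := by
            rw [hg, hm, hy2, hyr]
          have := inj2 _ _ _ _ heq
          omega
    choose f hf using hP2
    have hfs0 : f 0 (by omega) = s := by
      have : Sum.inl (f 0 (by omega)) = Sum.inl s :=
        (hf 0 (by omega)).symm.trans (hx2.trans hxs)
      exact Sum.inl.inj this
    set l : List V := List.ofFn (fun i : Fin n => f i i.isLt) with hldef
    have hlen : l.length = n := by simp [hldef]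
    have hgetl : ∀ (i : ℕ) (hi : i < n), l.get ⟨i, by omega⟩ = f i hi := by
      intro i hi
      exact List.get_ofFn _ _
    have hfnt : f (n - 1) (by omega) = t := by
      have harc := hc2 (n - 1) (by omega)
      rw [hf (n - 1) (by omega)] at harc
      have h2e : p2.get ⟨n - 1 + 1, by omega⟩ = Sum.inr (⟨n - 1, by omega⟩ : Fin n) :=
        ((get_idx_congr p2 (by omega) (by omega) (by omega)).trans hy2).trans hyr
      rw [h2e] at harc
      rcases in_inr harc with ⟨_, h0'⟩ | ⟨he, _⟩ | ⟨i, he, _⟩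
      · have : n - 1 = 0 := h0'
        omega
      · exact Sum.inl.inj he
      · simp at he
    refine ⟨l, ⟨?_, ?_, ?_, ?_⟩, ?_⟩
    · unfold List.Chain'
      rw [List.isChain_iff_getElem]
      intro i hi
      show A (l.get ⟨i, by omega⟩) (l.get ⟨i + 1, hi⟩)
      rw [hlen] at hi
      have harc := hc2 i (by omega)
      rw [hf i (by omega), hf (i + 1) (by omega)] at harc
      have hA := inl_inl harc
      rw [hgetl i (by omega), hgetl (i + 1) (by omega)]
      exact hA
    · rw [hldef, List.nodup_ofFn]
      intro a b hab
      have heq : p2.get ⟨(a : ℕ), by omega⟩ = p2.get ⟨(b : ℕ), by omega⟩ := by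
        rw [hf _ a.isLt, hf _ b.isLt]
        exact congrArg Sum.inl hab
      exact Fin.ext (inj2 _ _ _ _ heq)
    · rw [head?_get (show 0 < l.length by omega)]
      rw [hgetl 0 (by omega), hfs0]
    · rw [getLast?_get (show 0 < l.length by omega)]
      rw [get_idx_congr l (show l.length - 1 = n - 1 by omega) (by omega) (by omega)]
      rw [hgetl (n - 1) (by omega), hfnt]
    · intro v
      rcases hall (Sum.inl v) with hv | hv
      · rcases hmem1 _ hv with h' | ⟨j, h'⟩
        · obtain rfl : v = s := Sum.inl.inj h'
          rw [← hfs0, ← hgetl 0 (by omega)]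
          exact List.get_mem l _
        · simp at h'
      · obtain ⟨⟨i, hi⟩, hgi⟩ := List.mem_iff_get.mp hv
        have hin : i < n := by
          by_contra h'
          have hie : i = n := by omega
          subst hie
          have hy' : y = Sum.inl v := by rw [← hy2]; exact hgi
          rw [hyr] at hy'
          simp at hy'
        have hv' : (Sum.inl v : V ⊕ Fin n) = Sum.inl (f i hin) := by
          rw [← hgi]
          exact hf i hin
        obtain rfl : v = f i hin := Sum.inl.inj hv'
        rw [← hgetl i hin]
        exact List.get_mem l _
  · -- contradiction case : k ≥ 2
    exfalso
    have hk2' : 2 ≤ k := by omega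
    have hkn : k ≤ n := by omega
    have hym : y = Sum.inr (⟨n - k, by omega⟩ : Fin n) := by
      rw [← hy1]
      exact (get_idx_congr p1 (show n = k + (n - k) by omega) (by omega) (by omega)).trans
        (stepA (n - k) (by omega) (by omega))
    have harc2 := hc2 (n - 1) (by omega)
    have h2e : p2.get ⟨n - 1 + 1, by omega⟩ = Sum.inr (⟨n - k, by omega⟩ : Fin n) :=
      ((get_idx_congr p2 (by omega) (by omega) (by omega)).trans hy2).trans hym
    rw [h2e] at harc2
    have heq : p2.get ⟨n - 1, by omega⟩ = p1.get ⟨n - 1, by omega⟩ := by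
      rcases in_inr harc2 with ⟨hzs, hm0⟩ | ⟨_, hmt⟩ | ⟨i, hzi, hmi⟩
      · have hm0' : n - k = 0 := hm0
        rw [hzs, ← hs]
        exact get_idx_congr p1 (show k - 1 = n - 1 by omega) (by omega) (by omega)
      · have hmt' : n - k = n - 1 := hmt
        omega
      · have hmi' : n - k = (i : ℕ) + 1 := hmi
        have hgi : p1.get ⟨n - 1, by omega⟩ = Sum.inr i :=
          (get_idx_congr p1 (show n - 1 = k + (i : ℕ) by omega) (by omega) (by omega)).trans
            (stepA (i : ℕ) i.isLt (by omega))
        exact hzi.trans hgi.symm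
    have hw1 : p1.get ⟨n - 1, by omega⟩ ∈ p1 := List.get_mem p1 ⟨n - 1, by omega⟩
    have hw2 : p1.get ⟨n - 1, by omega⟩ ∈ p2 := heq ▸ List.get_mem p2 ⟨n - 1, by omega⟩
    rcases hdisj _ hw1 hw2 with hwx | hwy
    · have h' : p2.get ⟨n - 1, by omega⟩ = p2.get ⟨0, by omega⟩ := by rw [heq, hwx, hx2]
      have := inj2 _ _ _ _ h'
      omega
    · have h' : p2.get ⟨n - 1, by omega⟩ = p2.get ⟨n, by omega⟩ := by rw [heq, hwy, hy2]
      have := inj2 _ _ _ _ h'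
      omega

end Stmt7Aux

/-- There exist vertices `x, y` of `G'` and two paths from `x` to `y` in `G'`
sharing no vertices other than `x` and `y`, each containing at least `n + 1`
vertices, iff `G` has a Hamiltonian path from `s` to `t`. -/
theorem stmt7 {V : Type*} [Fintype V] (A : V → V → Prop) (s t : V) (hst : s ≠ t)
    (n : ℕ) (hn : n = Fintype.card V) (hn2 : 2 ≤ n) :
    (∃ (x y : V ⊕ Fin n) (p1 p2 : List (V ⊕ Fin n)),
        p1 ≠ p2 ∧
        IsPath (extArcs A s t n) x y p1 ∧ IsPath (extArcs A s t n) x y p2 ∧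
        (∀ z, z ∈ p1 → z ∈ p2 → z = x ∨ z = y) ∧
        n + 1 ≤ p1.length ∧ n + 1 ≤ p2.length) ↔
      ∃ p : List V, IsPath A s t p ∧ ∀ v : V, v ∈ p := by
  classical
  constructor
  · rintro ⟨x, y, p1, p2, hne, h1, h2, hdisj, hlen1, hlen2⟩
    have hnd1 := h1.2.1
    have hnd2 := h2.2.1
    have hx1 : p1.get ⟨0, by omega⟩ = x := by
      have := (Stmt7Aux.head?_get (l := p1) (by omega)).symm.trans h1.2.2.1
      exact Option.some.inj this
    have hy1 : p1.get ⟨p1.length - 1, by omega⟩ = y := by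
      have := (Stmt7Aux.getLast?_get (l := p1) (by omega)).symm.trans h1.2.2.2
      exact Option.some.inj this
    have hx2 : p2.get ⟨0, by omega⟩ = x := by
      have := (Stmt7Aux.head?_get (l := p2) (by omega)).symm.trans h2.2.2.1
      exact Option.some.inj this
    have hy2 : p2.get ⟨p2.length - 1, by omega⟩ = y := by
      have := (Stmt7Aux.getLast?_get (l := p2) (by omega)).symm.trans h2.2.2.2
      exact Option.some.inj this
    have hxy : x ≠ y := by
      intro h
      have heq : p1.get ⟨0, by omega⟩ = p1.get ⟨p1.length - 1, by omega⟩ := by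
        rw [hx1, hy1, h]
      have := Fin.mk_eq_mk.mp (hnd1.get_inj_iff.mp heq)
      omega
    have hxm1 : x ∈ p1 := by rw [← hx1]; exact List.get_mem _ _
    have hym1 : y ∈ p1 := by rw [← hy1]; exact List.get_mem _ _
    have hxm2 : x ∈ p2 := by rw [← hx2]; exact List.get_mem _ _
    have hym2 : y ∈ p2 := by rw [← hy2]; exact List.get_mem _ _
    have hcS1 : p1.toFinset.card = p1.length := List.toFinset_card_of_nodup hnd1
    have hcS2 : p2.toFinset.card = p2.length := List.toFinset_card_of_nodup hnd2
    have hsub : p1.toFinset ∩ p2.toFinset ⊆ {x, y} := by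
      intro z hz
      simp only [Finset.mem_inter, List.mem_toFinset] at hz
      rcases hdisj z hz.1 hz.2 with h | h <;> simp [h]
    have hxycard : ({x, y} : Finset (V ⊕ Fin n)).card = 2 := by
      rw [Finset.card_insert_of_notMem (by simp [hxy]), Finset.card_singleton]
    have hinter : (p1.toFinset ∩ p2.toFinset).card ≤ 2 := by
      have := Finset.card_le_card hsub
      omega
    have hcu : Fintype.card (V ⊕ Fin n) = 2 * n := by
      rw [Fintype.card_sum, Fintype.card_fin, ← hn]; ring
    have huni : (p1.toFinset ∪ p2.toFinset).card ≤ 2 * n := by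
      have := Finset.card_le_univ (p1.toFinset ∪ p2.toFinset)
      rwa [hcu] at this
    have hsum := Finset.card_union_add_card_inter p1.toFinset p2.toFinset
    have hL1 : p1.length = n + 1 := by omega
    have hL2 : p2.length = n + 1 := by omega
    have hucard : (p1.toFinset ∪ p2.toFinset).card = Fintype.card (V ⊕ Fin n) := by omega
    have huniv := Finset.eq_univ_of_card _ hucard
    have hall : ∀ z : V ⊕ Fin n, z ∈ p1 ∨ z ∈ p2 := by
      intro z
      have : z ∈ p1.toFinset ∪ p2.toFinset := huniv ▸ Finset.mem_univ z
      simpa [Finset.mem_union, List.mem_toFinset] using this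
    rcases hall (Sum.inr ⟨0, by omega⟩) with h0 | h0
    · exact Stmt7Aux.key hst hn2 hn h1 h2 hdisj hL1 hL2 hall h0
    · exact Stmt7Aux.key hst hn2 hn h2 h1 (fun z hz2 hz1 => hdisj z hz1 hz2) hL2 hL1
        (fun z => (hall z).symm) h0
  · rintro ⟨p, ⟨hcp, hndp, hhp, hgp⟩, hallp⟩
    have hplen : p.length = n := by
      have huv : p.toFinset = Finset.univ :=
        Finset.eq_univ_iff_forall.mpr (fun v => List.mem_toFinset.mpr (hallp v))
      have := congrArg Finset.card huv
      rw [List.toFinset_card_of_nodup hndp, Finset.card_univ, ← hn] at this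
      exact this
    set q2 : List (V ⊕ Fin n) :=
      List.ofFn (fun i : Fin (n + 1) =>
        if (i : ℕ) = 0 then Sum.inl s else Sum.inr ⟨(i : ℕ) - 1, by omega⟩) with hq2def
    have hlq2 : q2.length = n + 1 := by simp [hq2def]
    have hgq2 : ∀ (i : ℕ) (hi : i < n + 1),
        q2.get ⟨i, by omega⟩ =
          if i = 0 then Sum.inl s else Sum.inr ⟨i - 1, by omega⟩ := by
      intro i hi
      exact List.get_ofFn _ _
    have hndq2 : q2.Nodup := by
      rw [hq2def, List.nodup_ofFn]
      intro a b hab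
      simp only [] at hab
      by_cases ha : (a : ℕ) = 0 <;> by_cases hb : (b : ℕ) = 0
      · exact Fin.ext (by omega)
      · rw [if_pos ha, if_neg hb] at hab; simp at hab
      · rw [if_neg ha, if_pos hb] at hab; simp at hab
      · rw [if_neg ha, if_neg hb] at hab
        simp only [Sum.inr.injEq, Fin.mk.injEq] at hab
        exact Fin.ext (by omega)
    have hcq2 : q2.Chain' (extArcs A s t n) := by
      unfold List.Chain'
      rw [List.isChain_iff_getElem]
      intro i hi
      show extArcs A s t n (q2.get ⟨i, by omega⟩) (q2.get ⟨i + 1, hi⟩)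
      rw [hlq2] at hi
      rw [hgq2 i (by omega), hgq2 (i + 1) (by omega)]
      by_cases hi0 : i = 0
      · subst hi0
        rw [if_pos rfl, if_neg (by omega)]
        exact Or.inr (Or.inl ⟨⟨1 - 1, by omega⟩, rfl, rfl, rfl⟩)
      · rw [if_neg hi0, if_neg (by omega)]
        exact Or.inr (Or.inr (Or.inr ⟨⟨i - 1, by omega⟩, ⟨i + 1 - 1, by omega⟩, rfl, rfl,
          by show i + 1 - 1 = (i - 1) + 1; omega⟩))
    refine ⟨Sum.inl s, Sum.inr ⟨n - 1, by omega⟩,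
      p.map Sum.inl ++ [Sum.inr ⟨n - 1, by omega⟩], q2, ?_, ⟨?_, ?_, ?_, ?_⟩,
      ⟨hcq2, hndq2, ?_, ?_⟩, ?_, ?_, ?_⟩
    · -- q1 ≠ q2
      intro hq
      have h1 : q2.get ⟨1, by omega⟩ = Sum.inr (⟨0, by omega⟩ : Fin n) := by
        rw [hgq2 1 (by omega), if_neg (by omega)]
      have hmem : Sum.inr (⟨0, by omega⟩ : Fin n) ∈ q2 := by
        rw [← h1]; exact List.get_mem q2 _
      have hmem2 : Sum.inr (⟨0, by omega⟩ : Fin n) ∈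
          List.map Sum.inl p ++ [Sum.inr (⟨n - 1, by omega⟩ : Fin n)] := by
        rw [hq]; exact hmem
      clear hmem
      rename' hmem2 => hmem
      simp only [List.mem_append, List.mem_map, List.mem_singleton] at hmem
      rcases hmem with ⟨v, _, hv⟩ | hv
      · simp at hv
      · have : (0 : ℕ) = n - 1 := by
          have := Sum.inr.inj hv
          exact Fin.mk_eq_mk.mp this
        omega
    · -- Chain' q1
      unfold List.Chain'
      rw [List.isChain_append]
      refine ⟨(List.isChain_map Sum.inl).mpr (hcp.imp fun a b hab =>
        Or.inl ⟨a, b, rfl, rfl, hab⟩), by simp, ?_⟩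
      intro z hz w hw
      rw [List.getLast?_map, hgp] at hz
      simp only [Option.map_some, Option.mem_def, Option.some.injEq] at hz
      simp only [List.head?_cons, Option.mem_def, Option.some.injEq] at hw
      subst hz; subst hw
      exact Or.inr (Or.inr (Or.inl ⟨⟨n - 1, by omega⟩, rfl, rfl, rfl⟩))
    · -- Nodup q1
      rw [List.nodup_append]
      exact ⟨hndp.map Sum.inl_injective, List.nodup_singleton _, by simp⟩
    · -- head? q1
      rw [List.head?_append, List.head?_map, hhp]
      rfl
    · -- getLast? q1
      exact List.getLast?_concat
    · -- head? q2
      rw [Stmt7Aux.head?_get (show 0 < q2.length by omega), hgq2 0 (by omega),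
        if_pos rfl]
    · -- getLast? q2
      rw [Stmt7Aux.getLast?_get (show 0 < q2.length by omega),
        Stmt7Aux.get_idx_congr q2 (show q2.length - 1 = n by omega) (by omega) (by omega),
        hgq2 n (by omega), if_neg (by omega)]
    · -- disjointness
      intro z hz1 hz2
      rw [hq2def, List.mem_ofFn] at hz2
      obtain ⟨i, rfl⟩ := hz2
      by_cases hi0 : (i : ℕ) = 0
      · left
        simp only [hi0, if_pos]
      · right
        simp only [if_neg hi0] at hz1 ⊢
        simp only [List.mem_append, List.mem_map, List.mem_singleton] at hz1
        rcases hz1 with ⟨v, _, hv⟩ | hv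
        · simp at hv
        · exact hv
    · -- length q1
      simp [hplen]
    · -- length q2
      omega
end

section
/- Let G be a directed graph with strictly positive rational arc weights, let s ≠ t be vertices, and let M ∈ ℚ≥0. Let G′ be obtained from G by adding a new arc e0 from s to t with weight 0 (in addition to any existing arcs from s to t). Then there exist a vertex y and three pairwise distinct nonempty paths p1, p2, p3 in G′, each from s to y, pairwise sharing no vertices other than s and y, with |p1| ≤ M, |p2| ≤ M and |p3| ≤ 0, if and only if G contains two distinct paths from s to t that share no vertices other than s and t and each have length at most M. -/
/-- `es` is a nonempty simple path from `x` to `y` in the directed multigraph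
with arcs `E`, source map `src` and target map `tgt`, given as its list of
arcs: it is nonempty, consecutive arcs are incident, it starts at `x`, ends at
`y`, and visits no vertex twice. -/
def IsEPath {V E : Type*} (src tgt : E → V) (x y : V) (es : List E) : Prop :=
  es ≠ [] ∧ es.head?.map src = some x ∧ es.getLast?.map tgt = some y ∧
  es.Chain' (fun e f => tgt e = src f) ∧ (x :: es.map tgt).Nodup

/-- The list of vertices visited by a path starting at `x` with arc list `es`. -/
def ePathVerts {V E : Type*} (tgt : E → V) (x : V) (es : List E) : List V :=
  x :: es.map tgt

/-- The length of a path: the sum of the weights of its arcs. -/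
def ePathLen {E : Type*} (w : E → ℚ) (es : List E) : ℚ := (es.map w).sum


lemma map_some_path {V E : Type*} (src tgt : E → V) (s t x y : V) (q : List E) :
    IsEPath (fun e => Option.elim e s src) (fun e => Option.elim e t tgt) x y (q.map some) ↔
      IsEPath src tgt x y q := by
  simp [IsEPath, List.head?_map, List.getLast?_map, List.Chain', List.isChain_map, List.map_map,
    Option.map_map, show ((fun e : Option E => e.elim t tgt) ∘ some) = tgt from rfl,
    show ((fun e : Option E => e.elim s src) ∘ some) = src from rfl]

lemma verts_map_some {V E : Type*} (tgt : E → V) (t x : V) (q : List E) :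
    ePathVerts (fun e => Option.elim e t tgt) x (q.map some) = ePathVerts tgt x q := by
  simp [ePathVerts, List.map_map, show ((fun e : Option E => e.elim t tgt) ∘ some) = tgt from rfl]

lemma len_map_some {E : Type*} (w : E → ℚ) (q : List E) :
    ePathLen (fun e => Option.elim e 0 w) (q.map some) = ePathLen w q := by
  simp [ePathLen, List.map_map, show ((fun e : Option E => e.elim 0 w) ∘ some) = w from rfl]

lemma eq_map_some {E : Type*} (p : List (Option E)) (h : none ∉ p) :
    ∃ q : List E, p = q.map some := by
  induction p with
  | nil => exact ⟨[], rfl⟩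
  | cons e rest ih =>
    obtain ⟨q, hq⟩ := ih (fun h' => h (List.mem_cons_of_mem _ h'))
    cases e with
    | none => exact absurd List.mem_cons_self h
    | some a => exact ⟨a :: q, by simp [hq]⟩

lemma no_none {V E : Type*} (src tgt : E → V) (s t : V) (p : List (Option E))
    (hp : IsEPath (fun e => Option.elim e s src) (fun e => Option.elim e t tgt) s t p)
    (hne : p ≠ [none]) : none ∉ p := by
  intro hmem
  obtain ⟨a, b, rfl⟩ := List.append_of_mem hmem
  obtain ⟨hnil, hhead, hlast, hchain, hnodup⟩ := hp
  rcases a.eq_nil_or_concat with rfl | ⟨a', f, rfl⟩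
  · -- p = none :: b
    rcases b.eq_nil_or_concat with rfl | ⟨b', g, rfl⟩
    · exact hne rfl
    · rw [List.concat_eq_append] at hlast hnodup
      have hlast' : Option.elim g t tgt = t := by
        have h1 : (([] : List (Option E)) ++ none :: (b' ++ [g])).getLast? = some g := by
          rw [List.nil_append, ← List.cons_append, List.getLast?_concat]
        rw [h1] at hlast
        simpa using hlast
      have hmem' : t ∈ (b' ++ [g]).map (fun e => Option.elim e t tgt) :=
        List.mem_map.mpr ⟨g, by simp, hlast'⟩
      have hnd : (t :: (b' ++ [g]).map (fun e => Option.elim e t tgt)).Nodup := by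
        simpa using hnodup.of_cons
      exact (List.nodup_cons.mp hnd).1 hmem'
  · rw [List.concat_eq_append] at hchain hnodup
    have hch : Option.elim f t tgt = s := by
      have h2 : List.Chain' (fun e f => Option.elim e t tgt = Option.elim f s src)
          ((a' ++ [f]) ++ none :: b) := hchain
      have h3 := (List.isChain_append.mp h2).2.2 f (by simp [List.getLast?_concat]) none (by simp)
      simpa using h3
    have hs : s ∈ ((a' ++ [f]) ++ none :: b).map (fun e => Option.elim e t tgt) :=
      List.mem_map.mpr ⟨f, by simp, hch⟩
    exact (List.nodup_cons.mp hnodup).1 hs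

/-- Let `G'` be obtained from `G` (strictly positive weights) by adding a new
arc `e0 = none` from `s` to `t` of weight `0`.  There exist a vertex `y` and
three pairwise distinct nonempty paths `p1, p2, p3` in `G'`, each from `s` to
`y`, pairwise sharing no vertices other than `s` and `y`, with `|p1| ≤ M`,
`|p2| ≤ M` and `|p3| ≤ 0`, iff `G` contains two distinct paths from `s` to `t`
sharing no vertices other than `s` and `t`, each of length at most `M`. -/
theorem stmt8 {V E : Type*} (src tgt : E → V) (w : E → ℚ) (hw : ∀ e, 0 < w e)
    (s t : V) (hst : s ≠ t) (M : ℚ) (hM : 0 ≤ M) :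
    (∃ (y : V) (p1 p2 p3 : List (Option E)),
        p1 ≠ p2 ∧ p1 ≠ p3 ∧ p2 ≠ p3 ∧
        IsEPath (fun e => e.elim s src) (fun e => e.elim t tgt) s y p1 ∧
        IsEPath (fun e => e.elim s src) (fun e => e.elim t tgt) s y p2 ∧
        IsEPath (fun e => e.elim s src) (fun e => e.elim t tgt) s y p3 ∧
        (∀ z, z ∈ ePathVerts (fun e => e.elim t tgt) s p1 →
            z ∈ ePathVerts (fun e => e.elim t tgt) s p2 → z = s ∨ z = y) ∧
        (∀ z, z ∈ ePathVerts (fun e => e.elim t tgt) s p1 →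
            z ∈ ePathVerts (fun e => e.elim t tgt) s p3 → z = s ∨ z = y) ∧
        (∀ z, z ∈ ePathVerts (fun e => e.elim t tgt) s p2 →
            z ∈ ePathVerts (fun e => e.elim t tgt) s p3 → z = s ∨ z = y) ∧
        ePathLen (fun e => e.elim 0 w) p1 ≤ M ∧
        ePathLen (fun e => e.elim 0 w) p2 ≤ M ∧
        ePathLen (fun e => e.elim 0 w) p3 ≤ 0) ↔
      (∃ q1 q2 : List E, q1 ≠ q2 ∧
        IsEPath src tgt s t q1 ∧ IsEPath src tgt s t q2 ∧
        (∀ z, z ∈ ePathVerts tgt s q1 → z ∈ ePathVerts tgt s q2 → z = s ∨ z = t) ∧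
        ePathLen w q1 ≤ M ∧ ePathLen w q2 ≤ M) := by
  constructor
  · rintro ⟨y, p1, p2, p3, h12, h13, h23, hp1, hp2, hp3, d12, d13, d23, l1, l2, l3⟩
    have hall : ∀ e ∈ p3, e = (none : Option E) := by
      intro e he
      have h1 : (fun e : Option E => e.elim 0 w) e ≤ ePathLen (fun e : Option E => e.elim 0 w) p3 := by
        apply List.single_le_sum (fun x hx => ?_) _ (List.mem_map_of_mem he)
        simp only [List.mem_map] at hx
        obtain ⟨a, -, rfl⟩ := hx
        cases a with
        | none => simp
        | some a => exact (hw a).le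
      cases e with
      | none => rfl
      | some a => exact absurd (le_trans h1 l3) (by simpa using (hw a).not_ge)
    have hp3' : p3 = [none] := by
      obtain ⟨hnil, -, -, hchain, -⟩ := hp3
      cases p3 with
      | nil => exact absurd rfl hnil
      | cons e rest =>
        have he := hall e (by simp)
        subst he
        cases rest with
        | nil => rfl
        | cons f rest' =>
          have hf := hall f (by simp)
          subst hf
          have h2 := (List.isChain_cons_cons.mp hchain).1
          simp only [Option.elim] at h2
          exact absurd h2 hst.symm
    subst hp3'
    have hy : y = t := by
      have h3 := hp3.2.2.1
      simp [Option.elim] at h3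
      exact h3.symm
    subst y
    have hn1 := no_none src tgt s t p1 hp1 h13
    have hn2 := no_none src tgt s t p2 hp2 h23
    obtain ⟨q1, rfl⟩ := eq_map_some p1 hn1
    obtain ⟨q2, rfl⟩ := eq_map_some p2 hn2
    refine ⟨q1, q2, ?_, (map_some_path src tgt s t s t q1).mp hp1,
      (map_some_path src tgt s t s t q2).mp hp2, ?_, ?_, ?_⟩
    · exact fun h => h12 (by rw [h])
    · intro z hz1 hz2
      exact d12 z (by rwa [verts_map_some]) (by rwa [verts_map_some])
    · rwa [len_map_some] at l1
    · rwa [len_map_some] at l2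
  · rintro ⟨q1, q2, hq, hq1, hq2, hd, hl1, hl2⟩
    refine ⟨t, q1.map some, q2.map some, [none], ?_, ?_, ?_,
      (map_some_path src tgt s t s t q1).mpr hq1,
      (map_some_path src tgt s t s t q2).mpr hq2, ?_, ?_, ?_, ?_, ?_, ?_, ?_⟩
    · exact fun h => hq (List.map_injective_iff.mpr (Option.some_injective E) h)
    · intro h
      have : (none : Option E) ∈ q1.map some := by rw [h]; simp
      simp at this
    · intro h
      have : (none : Option E) ∈ q2.map some := by rw [h]; simp
      simp at this
    · simp [IsEPath, Option.elim, hst, List.Chain', List.isChain_singleton]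
    · intro z hz1 hz2
      exact hd z (by rwa [verts_map_some] at hz1) (by rwa [verts_map_some] at hz2)
    · intro z hz1 hz3
      simp [ePathVerts, Option.elim] at hz3
      tauto
    · intro z hz2 hz3
      simp [ePathVerts, Option.elim] at hz3
      tauto
    · rwa [len_map_some]
    · rwa [len_map_some]
    · simp [ePathLen]
end
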